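/- Let R be a domain and G a right orderable group. Then the group of units of the group ring RG is exactly {u·g : u ∈ R×, g ∈ G}, i.e., all units are trivial. -/

import Mathlib

open MonoidAlgebra Finsupp in
lemma aux_support_card_one {R G : Type*} [Ring R] [IsDomain R] [Group G]
    [TwoUniqueProds G] {f g : MonoidAlgebra R G} (h : f * g = 1) :
    f.coeff.support.card = 1 ∧ g.coeff.support.card = 1 := by
  classical
  have hf : f ≠ 0 := by rintro rfl; simp at h
  have hg : g ≠ 0 := by rintro rfl; simp at h
  have hA : f.coeff.support.Nonempty := Finsupp.support_nonempty_iff.mpr (by simpa using hf)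
  have hB : g.coeff.support.Nonempty := Finsupp.support_nonempty_iff.mpr (by simpa using hg)
  by_contra hcon
  have hlt : 1 < f.coeff.support.card * g.coeff.support.card := by
    rcases Nat.lt_or_ge 1 (f.coeff.support.card * g.coeff.support.card) with h' | h'
    · exact h'
    · exfalso
      have h1 : 1 ≤ f.coeff.support.card := hA.card_pos
      have h2 : 1 ≤ g.coeff.support.card := hB.card_pos
      have := Nat.le_antisymm h' (Nat.one_le_iff_ne_zero.mpr (by positivity))
      exact hcon ⟨Nat.eq_one_of_mul_eq_one_right this, Nat.eq_one_of_mul_eq_one_left this⟩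
  obtain ⟨p1, hp1, p2, hp2, hne, hu1, hu2⟩ :=
    TwoUniqueProds.uniqueMul_of_one_lt_card hlt
  rw [Finset.mem_product] at hp1 hp2
  have hc1 : (f * g).coeff (p1.1 * p1.2) ≠ 0 := by
    rw [MonoidAlgebra.mul_apply_mul_eq_mul_of_uniqueMul hu1]
    exact mul_ne_zero (Finsupp.mem_support_iff.mp hp1.1) (Finsupp.mem_support_iff.mp hp1.2)
  have hc2 : (f * g).coeff (p2.1 * p2.2) ≠ 0 := by
    rw [MonoidAlgebra.mul_apply_mul_eq_mul_of_uniqueMul hu2]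
    exact mul_ne_zero (Finsupp.mem_support_iff.mp hp2.1) (Finsupp.mem_support_iff.mp hp2.2)
  have hprodne : p1.1 * p1.2 ≠ p2.1 * p2.2 := by
    intro he
    obtain ⟨h1, h2⟩ := hu1 hp2.1 hp2.2 he.symm
    exact hne (Prod.ext h1.symm h2.symm)
  rw [h] at hc1 hc2
  rw [MonoidAlgebra.one_def] at hc1 hc2
  rcases eq_or_ne (p1.1 * p1.2) 1 with h1 | h1
  · exact hc2 (Finsupp.single_eq_of_ne' (fun e => hprodne (h1.trans e)))
  · exact hc1 (Finsupp.single_eq_of_ne' (fun e => h1 e.symm))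

/-- if `R` is a domain and `G` is a right orderable group, then all
units of the group ring `RG` are trivial: they are exactly the elements
`u·g` with `u ∈ Rˣ` and `g ∈ G`. -/
theorem stmt_4 (R : Type*) (G : Type*) [Ring R] [IsDomain R] [Group G]
    (hro : ∃ r : LinearOrder G, ∀ a b : G, r.lt a b → ∀ g : G, r.lt (a * g) (b * g))
    (x : MonoidAlgebra R G) :
    IsUnit x ↔ ∃ (u : Rˣ) (g : G), x = MonoidAlgebra.single g (u : R) := by
  classical
  obtain ⟨r, hr⟩ := hro
  letI : LinearOrder G := r
  haveI : MulRightStrictMono G := ⟨fun g a b h => hr a b h g⟩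
  haveI : TwoUniqueProds G := TwoUniqueProds.of_covariant_left
  constructor
  · rintro ⟨⟨f, g, hfg, hgf⟩, hx⟩
    subst hx
    obtain ⟨hf1, hg1⟩ := aux_support_card_one hfg
    obtain ⟨a, u, hu0, hfe⟩ := Finsupp.card_support_eq_one'.mp hf1
    obtain ⟨b, v, hv0, hge⟩ := Finsupp.card_support_eq_one'.mp hg1
    obtain rfl : f = MonoidAlgebra.single a u := MonoidAlgebra.coeff_injective hfe
    obtain rfl : g = MonoidAlgebra.single b v := MonoidAlgebra.coeff_injective hge
    have hfg' : MonoidAlgebra.single (a * b) (u * v) = (1 : MonoidAlgebra R G) := by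
      rw [← MonoidAlgebra.single_mul_single]; exact hfg
    have hgf' : MonoidAlgebra.single (b * a) (v * u) = (1 : MonoidAlgebra R G) := by
      rw [← MonoidAlgebra.single_mul_single]; exact hgf
    rw [MonoidAlgebra.one_def] at hfg' hgf'
    rcases MonoidAlgebra.single_inj.mp hfg' with ⟨_, huv⟩ | ⟨_, h10⟩
    · rcases MonoidAlgebra.single_inj.mp hgf' with ⟨_, hvu⟩ | ⟨_, h10⟩
      · exact ⟨⟨u, v, huv, hvu⟩, a, rfl⟩
      · exact absurd h10 one_ne_zero
    · exact absurd h10 one_ne_zero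
  · rintro ⟨u, g, rfl⟩
    refine ⟨⟨MonoidAlgebra.single g (u : R), MonoidAlgebra.single g⁻¹ ((u⁻¹ : Rˣ) : R), ?_, ?_⟩, rfl⟩
    · rw [MonoidAlgebra.single_mul_single, mul_inv_cancel, Units.mul_inv, MonoidAlgebra.one_def]
    · rw [MonoidAlgebra.single_mul_single, inv_mul_cancel, Units.inv_mul, MonoidAlgebra.one_def]
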